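/- With notation as in the preceding bordered matrix Y ∈ so(2l+1,ℂ) built from h = ⊕ a_i J with a_i ≠ 0 and a_i² ≠ a_j² for i≠j, and target eigenvalue data b_1,...,b_l with b_i ≠ 0, b_i² ≠ b_j² for i≠j, and b_j² ≠ a_k² for all j,k: Y has characteristic polynomial t·∏_{i=1}^{l}(t² + b_i²) if and only if for each i, z_{i1}² + z_{i2}² = d_i where d_i = ∏_{j=1}^{l}(b_j² - a_i²) / ∏_{j≠i}(a_j² - a_i²); moreover each d_i is nonzero under these hypotheses. -/

import Mathlib

open Matrix Polynomial

/-- The bordered skew-symmetric matrix `Y ∈ so(2l+1,ℂ)` with top-left `2l×2l`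
block `h = ⊕ᵢ aᵢ·J` (`J = [[0,1],[-1,0]]`), last column
`(z_{11}, z_{12}, …, z_{l1}, z_{l2}, 0)ᵀ` (encoded by `w : Fin (2l) → ℂ`),
and last row the negative transpose. -/
def YB (l : ℕ) (a : Fin l → ℂ) (w : Fin (2 * l) → ℂ) :
    Matrix (Fin (2 * l + 1)) (Fin (2 * l + 1)) ℂ :=
  Matrix.of fun p q =>
    if h1 : (q : ℕ) = (p : ℕ) + 1 ∧ (p : ℕ) % 2 = 0 ∧ (q : ℕ) < 2 * l then
      a ⟨(p : ℕ) / 2, by omega⟩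
    else if h2 : (p : ℕ) = (q : ℕ) + 1 ∧ (q : ℕ) % 2 = 0 ∧ (p : ℕ) < 2 * l then
      -a ⟨(q : ℕ) / 2, by omega⟩
    else if h3 : (q : ℕ) = 2 * l ∧ (p : ℕ) < 2 * l then w ⟨(p : ℕ), by omega⟩
    else if h4 : (p : ℕ) = 2 * l ∧ (q : ℕ) < 2 * l then -w ⟨(q : ℕ), by omega⟩
    else 0

/-- The target border values: `d_i = ∏ⱼ(b_j² - a_i²) / ∏_{j≠i}(a_j² - a_i²)`. -/
noncomputable def dval (l : ℕ) (a b : Fin l → ℂ) (i : Fin l) : ℂ :=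
  (∏ j, (b j ^ 2 - a i ^ 2)) / ∏ j ∈ Finset.univ.erase i, (a j ^ 2 - a i ^ 2)

namespace YBtest
noncomputable section

def g (l : ℕ) : Fin 2 × Fin l ≃ Fin (2 * l) where
  toFun x := ⟨2 * (x.2 : ℕ) + (x.1 : ℕ), by have := x.1.isLt; have := x.2.isLt; omega⟩
  invFun k := (⟨(k : ℕ) % 2, by omega⟩, ⟨(k : ℕ) / 2, by have := k.isLt; omega⟩)
  left_inv := by
    rintro ⟨⟨j, hj⟩, ⟨i, hi⟩⟩
    simp only [Prod.mk.injEq, Fin.mk.injEq]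
    omega
  right_inv := by
    rintro ⟨k, hk⟩
    simp only [Fin.mk.injEq]
    omega

variable (l : ℕ) (a : Fin l → ℂ) (t : ℂ) (w : Fin (2 * l) → ℂ)

def blk (i : Fin l) : Matrix (Fin 2) (Fin 2) ℂ := !![t, -(a i); a i, t]

lemma blk_apply (i : Fin l) (r s : Fin 2) :
    blk l a t i r s = if r = s then t else if (r : ℕ) = 0 then -(a i) else a i := by
  fin_cases r <;> fin_cases s <;> simp [blk]

def A : Matrix (Fin (2 * l)) (Fin (2 * l)) ℂ :=
  (blockDiagonal (blk l a t)).submatrix (g l).symm (g l).symm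

lemma M_eq :
    (Matrix.of fun i j : Fin (2 * l + 1) => (if i = j then t else 0) - YB l a w i j).submatrix
        finSumFinEquiv finSumFinEquiv =
      fromBlocks (A l a t) (Matrix.of fun p (_ : Fin 1) => -(w p))
        (Matrix.of fun (_ : Fin 1) q => w q) (Matrix.of fun _ _ => t) := by
  ext x y
  rcases x with p | u <;> rcases y with q | v
  · rcases p with ⟨p, hp⟩; rcases q with ⟨q, hq⟩
    simp only [submatrix_apply, finSumFinEquiv_apply_left, fromBlocks_apply₁₁, of_apply, YB, A, g,
      Equiv.coe_fn_symm_mk, blockDiagonal_apply, blk_apply, Fin.coe_castAdd, Fin.ext_iff,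
      Fin.mk.injEq]
    split_ifs <;> first | rfl | omega | skip
    all_goals (try simp only [sub_zero, zero_sub, neg_neg, sub_self, neg_inj]) <;>
      first
        | rfl
        | exact congrArg a (Fin.ext (by simp only [Fin.val_mk]; omega))
  · rcases p with ⟨p, hp⟩
    have hv := v.isLt
    simp only [submatrix_apply, finSumFinEquiv_apply_left, finSumFinEquiv_apply_right,
      fromBlocks_apply₁₂, of_apply, YB, Fin.coe_castAdd, Fin.coe_natAdd, Fin.ext_iff]
    split_ifs <;> first | omega | simp only [zero_sub, neg_inj]
  · rcases q with ⟨q, hq⟩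
    have hu := u.isLt
    simp only [submatrix_apply, finSumFinEquiv_apply_left, finSumFinEquiv_apply_right,
      fromBlocks_apply₂₁, of_apply, YB, Fin.coe_castAdd, Fin.coe_natAdd, Fin.ext_iff]
    split_ifs <;> first | omega | simp only [sub_neg_eq_add, zero_add]
  · have hu := u.isLt
    have hv := v.isLt
    simp only [submatrix_apply, finSumFinEquiv_apply_right, fromBlocks_apply₂₂, of_apply, YB,
      Fin.coe_natAdd, Fin.ext_iff]
    split_ifs <;> first | omega | (simp only [sub_zero])

def blkinv (i : Fin l) : Matrix (Fin 2) (Fin 2) ℂ :=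
  (t ^ 2 + a i ^ 2)⁻¹ • !![t, a i; -(a i), t]

def Ainv : Matrix (Fin (2 * l)) (Fin (2 * l)) ℂ :=
  (blockDiagonal (blkinv l a t)).submatrix (g l).symm (g l).symm

lemma blk_mul_blkinv (hta : ∀ i, t ^ 2 + a i ^ 2 ≠ 0) (i : Fin l) :
    blk l a t i * blkinv l a t i = 1 := by
  have h := hta i
  ext p q
  fin_cases p <;> fin_cases q <;>
    simp [blk, blkinv, Matrix.mul_apply, Fin.sum_univ_two, Matrix.one_apply] <;>
    field_simp <;> ring

lemma blkinv_mul_blk (hta : ∀ i, t ^ 2 + a i ^ 2 ≠ 0) (i : Fin l) :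
    blkinv l a t i * blk l a t i = 1 := by
  have h := hta i
  ext p q
  fin_cases p <;> fin_cases q <;>
    simp [blk, blkinv, Matrix.mul_apply, Fin.sum_univ_two, Matrix.one_apply] <;>
    field_simp <;> ring

lemma A_mul_Ainv (hta : ∀ i, t ^ 2 + a i ^ 2 ≠ 0) : A l a t * Ainv l a t = 1 := by
  rw [A, Ainv, submatrix_mul_equiv, ← blockDiagonal_mul]
  have : (fun i => blk l a t i * blkinv l a t i) = fun _ => (1 : Matrix (Fin 2) (Fin 2) ℂ) :=
    funext (blk_mul_blkinv l a t hta)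
  rw [this, show (fun _ : Fin l => (1 : Matrix (Fin 2) (Fin 2) ℂ)) = 1 from rfl, blockDiagonal_one, submatrix_one_equiv]

lemma Ainv_mul_A (hta : ∀ i, t ^ 2 + a i ^ 2 ≠ 0) : Ainv l a t * A l a t = 1 := by
  rw [A, Ainv, submatrix_mul_equiv, ← blockDiagonal_mul]
  have : (fun i => blkinv l a t i * blk l a t i) = fun _ => (1 : Matrix (Fin 2) (Fin 2) ℂ) :=
    funext (blkinv_mul_blk l a t hta)
  rw [this, show (fun _ : Fin l => (1 : Matrix (Fin 2) (Fin 2) ℂ)) = 1 from rfl, blockDiagonal_one, submatrix_one_equiv]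

lemma det_A : (A l a t).det = ∏ i, (t ^ 2 + a i ^ 2) := by
  rw [A, det_submatrix_equiv_self, det_blockDiagonal]
  refine Finset.prod_congr rfl fun i _ => ?_
  rw [blk, det_fin_two_of]
  ring


lemma two_mul_lt_aux {l : ℕ} (i : Fin l) : 2 * (i : ℕ) < 2 * l := by
  have := i.isLt; omega

lemma two_mul_add_one_lt_aux {l : ℕ} (i : Fin l) : 2 * (i : ℕ) + 1 < 2 * l := by
  have := i.isLt; omega

def cz (i : Fin l) : ℂ :=
  w ⟨2 * (i : ℕ), two_mul_lt_aux i⟩ ^ 2 +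
    w ⟨2 * (i : ℕ) + 1, two_mul_add_one_lt_aux i⟩ ^ 2

lemma quad_sum (hta : ∀ i, t ^ 2 + a i ^ 2 ≠ 0) :
    ∑ q, ∑ p, w p * Ainv l a t p q * w q =
      ∑ i, (t ^ 2 + a i ^ 2)⁻¹ * (t * cz l w i) := by
  have reidx : (∑ q, ∑ p, w p * Ainv l a t p q * w q) =
      ∑ y : Fin 2 × Fin l, ∑ x : Fin 2 × Fin l,
        w (g l x) * Ainv l a t (g l x) (g l y) * w (g l y) := by
    rw [← Equiv.sum_comp (g l) (fun q => ∑ p, w p * Ainv l a t p q * w q)]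
    exact Finset.sum_congr rfl fun y _ =>
      (Equiv.sum_comp (g l) (fun p => w p * Ainv l a t p (g l y) * w (g l y))).symm
  rw [reidx]
  have hAg : ∀ x y : Fin 2 × Fin l, Ainv l a t (g l x) (g l y) =
      blockDiagonal (blkinv l a t) x y := by
    intro x y
    simp [Ainv, Matrix.submatrix_apply, Equiv.symm_apply_apply]
  simp only [hAg, blockDiagonal_apply, mul_ite, ite_mul, zero_mul, mul_zero]
  rw [Fintype.sum_prod_type]
  simp only [Fintype.sum_prod_type, Finset.sum_ite_eq, Finset.sum_ite_eq', Finset.mem_univ,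
    if_true]
  rw [Finset.sum_comm]
  refine Finset.sum_congr rfl fun i _ => ?_
  have e0 : (g l) (0, i) = ⟨2 * (i : ℕ), two_mul_lt_aux i⟩ := by
    apply Fin.ext; simp [g]
  have e1 : (g l) (1, i) = ⟨2 * (i : ℕ) + 1, two_mul_add_one_lt_aux i⟩ := by
    apply Fin.ext; simp [g]
  simp only [Fin.sum_univ_two, e0, e1, blkinv, Matrix.smul_apply, Matrix.cons_val_zero,
    Matrix.cons_val_one, Matrix.head_cons, Matrix.head_fin_const, smul_eq_mul, cz,
    Matrix.of_apply, Matrix.cons_val', Matrix.empty_val', Matrix.cons_val_fin_one]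
  ring

lemma det_step (hta : ∀ i, t ^ 2 + a i ^ 2 ≠ 0) :
    (Matrix.of fun i j : Fin (2 * l + 1) => (if i = j then t else 0) - YB l a w i j).det =
      t * ∏ i, (t ^ 2 + a i ^ 2) +
        ∑ i, cz l w i * (t * ∏ j ∈ Finset.univ.erase i, (t ^ 2 + a j ^ 2)) := by
  rw [← det_submatrix_equiv_self finSumFinEquiv, M_eq]
  letI : Invertible (A l a t) := ⟨Ainv l a t, Ainv_mul_A l a t hta, A_mul_Ainv l a t hta⟩
  rw [det_fromBlocks₁₁]
  have hinv : ⅟(A l a t) = Ainv l a t := rfl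
  have key : (Matrix.of (fun (_ : Fin 1) q => w q) * Ainv l a t *
      Matrix.of (fun p (_ : Fin 1) => -(w p))) 0 0 =
      -∑ i, (t ^ 2 + a i ^ 2)⁻¹ * (t * cz l w i) := by
    rw [← quad_sum l a t w hta]
    simp only [Matrix.mul_apply, of_apply, mul_neg, Finset.sum_neg_distrib, Finset.sum_mul]
  rw [hinv, det_A]
  rw [Matrix.det_fin_one]
  rw [Matrix.sub_apply, key, of_apply]
  rw [sub_neg_eq_add, mul_add, Finset.mul_sum]
  rw [mul_comm _ t]
  congr 1
  refine Finset.sum_congr rfl fun i _ => ?_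
  rw [← Finset.mul_prod_erase _ _ (Finset.mem_univ i)]
  have h := hta i
  field_simp

lemma eval_charpoly (n : ℕ) (M : Matrix (Fin n) (Fin n) ℂ) (t : ℂ) :
    M.charpoly.eval t =
      (Matrix.of fun i j : Fin n => (if i = j then t else 0) - M i j).det := by
  rw [Matrix.charpoly, ← Polynomial.coe_evalRingHom, RingHom.map_det]
  congr 1
  ext i j
  by_cases h : i = j
  · subst h
    simp [Matrix.charmatrix_apply_eq]
  · simp [Matrix.charmatrix_apply_ne _ _ _ h, h]

lemma YB_charpoly :
    (YB l a w).charpoly =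
      X * ∏ i, (X ^ 2 + C (a i) ^ 2) +
        ∑ i, C (cz l w i) * (X * ∏ j ∈ Finset.univ.erase i, (X ^ 2 + C (a j) ^ 2)) := by
  apply Polynomial.eq_of_infinite_eval_eq
  have hsub : {t : ℂ | ∀ i, t ^ 2 + a i ^ 2 ≠ 0} ⊆
      {x : ℂ | eval x (YB l a w).charpoly =
        eval x (X * ∏ i, (X ^ 2 + C (a i) ^ 2) +
          ∑ i, C (cz l w i) * (X * ∏ j ∈ Finset.univ.erase i, (X ^ 2 + C (a j) ^ 2)))} := by
    intro t ht
    simp only [Set.mem_setOf_eq] at ht ⊢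
    rw [eval_charpoly, det_step l a t w ht]
    simp [eval_prod, eval_finset_sum]
  refine Set.Infinite.mono hsub ?_
  have hfin : {t : ℂ | ¬ ∀ i, t ^ 2 + a i ^ 2 ≠ 0}.Finite := by
    have : {t : ℂ | ¬ ∀ i, t ^ 2 + a i ^ 2 ≠ 0} ⊆
        ⋃ i : Fin l, {t : ℂ | IsRoot (X ^ 2 + C (a i ^ 2)) t} := by
      intro t ht
      simp only [Set.mem_setOf_eq, not_forall, not_not] at ht
      obtain ⟨i, hi⟩ := ht
      exact Set.mem_iUnion.2 ⟨i, by simp [IsRoot, hi]⟩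
    refine Set.Finite.subset (Set.finite_iUnion fun i => ?_) this
    exact Polynomial.finite_setOf_isRoot (Polynomial.monic_X_pow_add_C _ two_ne_zero).ne_zero
  have : {t : ℂ | ∀ i, t ^ 2 + a i ^ 2 ≠ 0} = {t : ℂ | ¬ ∀ i, t ^ 2 + a i ^ 2 ≠ 0}ᶜ := by
    ext t; simp
  rw [this]
  exact hfin.infinite_compl

end
end YBtest

namespace YBtest
noncomputable section
variable {l : ℕ} {a b : Fin l → ℂ}

lemma interp (hd : ∀ i, (∏ j ∈ Finset.univ.erase i, (a j ^ 2 - a i ^ 2)) ≠ 0)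
    (hinj : Function.Injective fun i : Fin l => -(a i ^ 2)) (s : ℂ) :
    ∏ j, (s + a j ^ 2) + ∑ i, dval l a b i * ∏ j ∈ Finset.univ.erase i, (s + a j ^ 2) =
      ∏ j, (s + b j ^ 2) := by
  rcases Nat.eq_zero_or_pos l with hl | hl
  · subst hl; simp
  set P : ℂ[X] := ∏ j, (X + C (a j ^ 2)) with hP
  set Q : ℂ[X] := ∏ j, (X + C (b j ^ 2)) with hQ
  set R : ℂ[X] := ∑ i, C (dval l a b i) * ∏ j ∈ Finset.univ.erase i, (X + C (a j ^ 2)) with hR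
  have hPm : P.Monic := monic_prod_of_monic _ _ fun j _ => monic_X_add_C _
  have hQm : Q.Monic := monic_prod_of_monic _ _ fun j _ => monic_X_add_C _
  have hPd : P.natDegree = l := by
    rw [hP, natDegree_prod_of_monic _ _ fun j _ => monic_X_add_C _]
    simp only [natDegree_X_add_C, Finset.sum_const, smul_eq_mul, mul_one, Finset.card_univ,
      Fintype.card_fin]
  have hQd : Q.natDegree = l := by
    rw [hQ, natDegree_prod_of_monic _ _ fun j _ => monic_X_add_C _]
    simp only [natDegree_X_add_C, Finset.sum_const, smul_eq_mul, mul_one, Finset.card_univ,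
      Fintype.card_fin]
  have hPdeg : P.degree = (l : ℕ) := by rw [degree_eq_natDegree hPm.ne_zero, hPd]
  have hQdeg : Q.degree = (l : ℕ) := by rw [degree_eq_natDegree hQm.ne_zero, hQd]
  have hdegPQ : (P - Q).degree < (l : ℕ) := by
    have := degree_sub_lt (hPdeg.trans hQdeg.symm) hPm.ne_zero
      (by rw [hPm.leadingCoeff, hQm.leadingCoeff])
    rwa [hPdeg] at this
  have hdegR : R.degree < (l : ℕ) := by
    refine lt_of_le_of_lt (degree_sum_le _ _) ?_
    rw [Finset.sup_lt_iff (by exact_mod_cast WithBot.bot_lt_coe (l : ℕ))]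
    intro i _
    refine lt_of_le_of_lt (degree_mul_le _ _) ?_
    have h1 : (C (dval l a b i)).degree ≤ 0 := degree_C_le
    have hm : (∏ j ∈ Finset.univ.erase i, (X + C (a j ^ 2))).Monic :=
      monic_prod_of_monic _ _ fun j _ => monic_X_add_C _
    have h2 : (∏ j ∈ Finset.univ.erase i, (X + C (a j ^ 2))).degree = ((l - 1 : ℕ) : WithBot ℕ) := by
      rw [degree_eq_natDegree hm.ne_zero, natDegree_prod_of_monic _ _ fun j _ => monic_X_add_C _]
      simp only [natDegree_X_add_C, Finset.sum_const, smul_eq_mul, mul_one,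
        Finset.card_erase_of_mem (Finset.mem_univ i), Finset.card_univ, Fintype.card_fin]
    calc (C (dval l a b i)).degree + (∏ j ∈ Finset.univ.erase i, (X + C (a j ^ 2))).degree
        ≤ 0 + ((l - 1 : ℕ) : WithBot ℕ) := add_le_add h1 h2.le
      _ < (l : ℕ) := by
          rw [zero_add]
          exact_mod_cast (by omega : l - 1 < l)
  have hroot : ∀ i : Fin l, ((P - Q) + R).eval (-(a i ^ 2)) = 0 := by
    intro i
    simp only [hP, hQ, hR, eval_add, eval_sub, eval_prod, eval_finset_sum, eval_mul, eval_C,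
      eval_X]
    have h1 : ∏ j, (-(a i ^ 2) + a j ^ 2) = 0 :=
      Finset.prod_eq_zero (Finset.mem_univ i) (by ring)
    rw [h1, Finset.sum_eq_single i]
    · have h2 : ∏ j ∈ Finset.univ.erase i, (-(a i ^ 2) + a j ^ 2) =
          ∏ j ∈ Finset.univ.erase i, (a j ^ 2 - a i ^ 2) :=
        Finset.prod_congr rfl fun _ _ => by ring
      have h3 : ∏ j, (-(a i ^ 2) + b j ^ 2) = ∏ j, (b j ^ 2 - a i ^ 2) :=
        Finset.prod_congr rfl fun _ _ => by ring
      rw [h2, h3, dval, div_mul_cancel₀ _ (hd i)]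
      ring
    · intro k _ hk
      have : ∏ j ∈ Finset.univ.erase k, (-(a i ^ 2) + a j ^ 2) = 0 :=
        Finset.prod_eq_zero (Finset.mem_erase.2 ⟨Ne.symm hk, Finset.mem_univ i⟩) (by ring)
      rw [this, mul_zero]
    · simp
  have hE0 : (P - Q) + R = 0 := by
    by_cases hE : (P - Q) + R = 0
    · exact hE
    refine Polynomial.eq_zero_of_natDegree_lt_card_of_eval_eq_zero _ hinj hroot ?_
    rw [Fintype.card_fin]
    rw [natDegree_lt_iff_degree_lt hE]
    exact lt_of_le_of_lt (degree_add_le _ _) (max_lt hdegPQ hdegR)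
  have := congrArg (eval s) hE0
  simp only [hP, hQ, hR, eval_add, eval_sub, eval_prod, eval_finset_sum, eval_mul, eval_C,
    eval_X, eval_zero] at this
  linear_combination this

end
end YBtest

open YBtest in
/-- Under the genericity hypotheses `aᵢ ≠ 0`, `aᵢ² ≠ a_j²` (`i ≠ j`), `bᵢ ≠ 0`,
`bᵢ² ≠ b_j²` (`i ≠ j`) and `b_j² ≠ a_k²`, the bordered matrix `Y` has
characteristic polynomial `t·∏ᵢ(t² + bᵢ²)` if and only if
`z_{i1}² + z_{i2}² = dᵢ` for all `i`; moreover every `dᵢ` is nonzero. -/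
theorem YB_charpoly_iff (l : ℕ) (a b : Fin l → ℂ) (w : Fin (2 * l) → ℂ)
    (ha0 : ∀ i, a i ≠ 0) (ha : ∀ i j, i ≠ j → a i ^ 2 ≠ a j ^ 2)
    (hb0 : ∀ i, b i ≠ 0) (hb : ∀ i j, i ≠ j → b i ^ 2 ≠ b j ^ 2)
    (hab : ∀ j k, b j ^ 2 ≠ a k ^ 2) :
    ((YB l a w).charpoly = X * ∏ i : Fin l, (X ^ 2 + C (b i) ^ 2) ↔
      ∀ i : Fin l,
        w ⟨2 * (i : ℕ), by have := i.isLt; omega⟩ ^ 2 +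
          w ⟨2 * (i : ℕ) + 1, by have := i.isLt; omega⟩ ^ 2 = dval l a b i) ∧
    ∀ i : Fin l, dval l a b i ≠ 0 := by
  classical
  have hdenom : ∀ i, (∏ j ∈ Finset.univ.erase i, (a j ^ 2 - a i ^ 2)) ≠ 0 := fun i =>
    Finset.prod_ne_zero_iff.2 fun j hj =>
      sub_ne_zero.2 (ha j i (Finset.mem_erase.1 hj).1)
  have hd : ∀ i, dval l a b i ≠ 0 := fun i =>
    div_ne_zero (Finset.prod_ne_zero_iff.2 fun j _ => sub_ne_zero.2 (hab j i)) (hdenom i)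
  refine ⟨?_, hd⟩
  rw [YB_charpoly l a w]
  have hinj : Function.Injective fun i : Fin l => -(a i ^ 2) := by
    intro i j hij
    by_contra hne
    exact ha i j hne (by simpa [neg_inj] using hij)
  constructor
  · intro h i
    show cz l w i = dval l a b i
    set τ : ℂ := Complex.I * a i with hτ
    have hτ2 : τ ^ 2 = -(a i ^ 2) := by rw [hτ, mul_pow, Complex.I_sq]; ring
    have hτ0 : τ ≠ 0 := mul_ne_zero Complex.I_ne_zero (ha0 i)
    have heq := congrArg (eval τ) h
    simp only [eval_add, eval_mul, eval_X, eval_prod, eval_finset_sum, eval_pow, eval_C,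
      hτ2] at heq
    have h1 : ∏ j, (-(a i ^ 2) + a j ^ 2) = 0 :=
      Finset.prod_eq_zero (Finset.mem_univ i) (by ring)
    rw [h1, mul_zero, zero_add, Finset.sum_eq_single i] at heq
    · have h2 : ∏ j ∈ Finset.univ.erase i, (-(a i ^ 2) + a j ^ 2) =
          ∏ j ∈ Finset.univ.erase i, (a j ^ 2 - a i ^ 2) :=
        Finset.prod_congr rfl fun _ _ => by ring
      have h3 : ∏ j, (-(a i ^ 2) + b j ^ 2) = ∏ j, (b j ^ 2 - a i ^ 2) :=
        Finset.prod_congr rfl fun _ _ => by ring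
      rw [h2, h3] at heq
      rw [dval, eq_div_iff (hdenom i)]
      apply mul_left_cancel₀ hτ0
      linear_combination heq
    · intro k _ hk
      have : ∏ j ∈ Finset.univ.erase k, (-(a i ^ 2) + a j ^ 2) = 0 :=
        Finset.prod_eq_zero (Finset.mem_erase.2 ⟨Ne.symm hk, Finset.mem_univ i⟩) (by ring)
      rw [this, mul_zero, mul_zero]
    · simp
  · intro h
    have hcz : ∀ i, cz l w i = dval l a b i := fun i => h i
    apply Polynomial.eq_of_infinite_eval_eq
    have : {x : ℂ | eval x (X * ∏ i, (X ^ 2 + C (a i) ^ 2) +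
        ∑ i, C (cz l w i) * (X * ∏ j ∈ Finset.univ.erase i, (X ^ 2 + C (a j) ^ 2))) =
        eval x (X * ∏ i : Fin l, (X ^ 2 + C (b i) ^ 2))} = Set.univ := by
      refine Set.eq_univ_of_forall fun t => ?_
      simp only [Set.mem_setOf_eq, eval_add, eval_mul, eval_X, eval_prod, eval_finset_sum,
        eval_pow, eval_C]
      have hint := interp (a := a) (b := b) hdenom hinj (t ^ 2)
      have hsum : ∑ i, cz l w i * (t * ∏ j ∈ Finset.univ.erase i, (t ^ 2 + a j ^ 2)) =
          t * ∑ i, dval l a b i * ∏ j ∈ Finset.univ.erase i, (t ^ 2 + a j ^ 2) := by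
        rw [Finset.mul_sum]
        exact Finset.sum_congr rfl fun i _ => by rw [hcz]; ring
      rw [hsum]
      linear_combination t * hint
    rw [this]
    exact Set.infinite_univ
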